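/- Assume ℕA is normal, i.e., ℕA = ℤ^d ∩ ℝ_{≥0}A. Then for every face F ⪯ A: ℕA − ℕF = {α ∈ ℤ^d : h_G(α) ≥ 0 for every facet G of A with G ⪰ F}. -/

import Mathlib

/-!
Common setup: `A` is a `d × n` integer matrix, given by its columns `a : Fin n → Lat d`,
with `ℤA = ℤ^d` (`SpansZ`) and `ℕA` pointed (`Pointed`).  Faces, semigroups, graded
modules, quasidegree sets, the dualizing complex `ω•_{S_A}` and the Ishida complexes
`℧•_F` are formalized below; all cohomology statements are expressed via the
(ℤ^d-)graded components of these complexes.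
-/

namespace GKZ

open scoped Classical

noncomputable section

abbrev Lat (d : ℕ) := Fin d → ℤ
abbrev CS (d : ℕ) := Fin d → ℂ
abbrev Laur (d : ℕ) := AddMonoidAlgebra ℂ (Lat d)

/-- Inclusion ℤ^d ⊆ ℂ^d. -/
def toC {d : ℕ} (α : Lat d) : CS d := fun i => (α i : ℂ)
/-- Inclusion ℤ^d ⊆ ℝ^d. -/
def toR {d : ℕ} (α : Lat d) : Fin d → ℝ := fun i => (α i : ℝ)
/-- The monomial t^α in the Laurent polynomial ring ℂ[ℤ^d]. -/
def mono {d : ℕ} (α : Lat d) : Laur d := AddMonoidAlgebra.single α 1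

variable {d n : ℕ}

/-- The affine semigroup ℕA generated by the columns of `A`. -/
def NA (a : Fin n → Lat d) : AddSubmonoid (Lat d) := AddSubmonoid.closure (Set.range a)

/-- ℕA is pointed: ℕA ∩ (−ℕA) = {0}. -/
def Pointed (a : Fin n → Lat d) : Prop := ∀ x ∈ NA a, -x ∈ NA a → x = 0

/-- ℤA = ℤ^d. -/
def SpansZ (a : Fin n → Lat d) : Prop :=
  AddSubgroup.closure (Set.range a) = (⊤ : AddSubgroup (Lat d))

/-- The real cone ℝ₊F spanned by the columns indexed by `F`. -/
def cone (a : Fin n → Lat d) (F : Set (Fin n)) : Set (Fin d → ℝ) :=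
  { x | ∃ c : Fin n → ℝ, (∀ i, 0 ≤ c i) ∧ (∀ i, i ∉ F → c i = 0) ∧ x = ∑ i, c i • toR (a i) }

/-- `F` is a face of `A`: ℝ₊F is a face of the cone ℝ₊A, and `F` consists of all the
columns of `A` lying on that face. -/
def IsFace (a : Fin n → Lat d) (F : Set (Fin n)) : Prop :=
  (∀ x y, x ∈ cone a Set.univ → y ∈ cone a Set.univ →
      x + y ∈ cone a F → x ∈ cone a F ∧ y ∈ cone a F) ∧
  (∀ i, toR (a i) ∈ cone a F → i ∈ F)

/-- ℕF. -/
def NFace (a : Fin n → Lat d) (F : Set (Fin n)) : AddSubmonoid (Lat d) :=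
  AddSubmonoid.closure (a '' F)

/-- ℤF. -/
def ZFace (a : Fin n → Lat d) (F : Set (Fin n)) : AddSubgroup (Lat d) :=
  AddSubgroup.closure (a '' F)

/-- ℂF ⊆ ℂ^d. -/
def CFace (a : Fin n → Lat d) (F : Set (Fin n)) : Submodule ℂ (CS d) :=
  Submodule.span ℂ (toC '' (a '' F))

/-- d_F, the rank of ℤF. -/
def dimF (a : Fin n → Lat d) (F : Set (Fin n)) : ℕ :=
  Module.finrank ℤ (Submodule.span ℤ (a '' F))

/-- σ_F, the sum of the columns of F. -/
def sigmaF (a : Fin n → Lat d) (F : Set (Fin n)) : Lat d :=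
  ∑ i : Fin n, if i ∈ F then a i else 0

/-- ε_A = a_1 + ⋯ + a_n. -/
def epsA (a : Fin n → Lat d) : Lat d := ∑ i : Fin n, a i

/-- ℕA − ℕF ⊆ ℤ^d. -/
def NAmNF (a : Fin n → Lat d) (F : Set (Fin n)) : Set (Lat d) :=
  {γ | ∃ u ∈ NA a, ∃ v ∈ NFace a F, γ = u - v}

/-- ℕF − ℕA ⊆ ℤ^d. -/
def NFmNA (a : Fin n → Lat d) (F : Set (Fin n)) : Set (Lat d) :=
  {γ | ∃ u ∈ NFace a F, ∃ v ∈ NA a, γ = u - v}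

/-- ℕF − ℕH ⊆ ℤ^d. -/
def NFmNH (a : Fin n → Lat d) (F H : Set (Fin n)) : Set (Lat d) :=
  {γ | ∃ u ∈ NFace a F, ∃ v ∈ NFace a H, γ = u - v}

/-- ℕA is normal: ℕA = ℤ^d ∩ ℝ₊A. -/
def Normal (a : Fin n → Lat d) : Prop :=
  ∀ γ : Lat d, γ ∈ NA a ↔ toR γ ∈ cone a Set.univ

/-- The Zariski closure of a subset of ℂ^d. -/
def zClosure {d : ℕ} (T : Set (CS d)) : Set (CS d) :=
  {x | ∀ p : MvPolynomial (Fin d) ℂ, (∀ y ∈ T, MvPolynomial.eval y p = 0) →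
    MvPolynomial.eval x p = 0}

def IsZClosed {d : ℕ} (Z : Set (CS d)) : Prop := zClosure Z ⊆ Z

/-- Irreducibility of a subset of ℂ^d in the Zariski topology. -/
def ZIrred {d : ℕ} (Z : Set (CS d)) : Prop :=
  Z.Nonempty ∧ ∀ C₁ C₂ : Set (CS d), IsZClosed C₁ → IsZClosed C₂ →
    Z ⊆ C₁ ∪ C₂ → Z ⊆ C₁ ∨ Z ⊆ C₂

/-- Krull (topological) dimension of a subset of ℂ^d with the Zariski topology:
the Krull dimension of the poset of irreducible Zariski-closed subsets contained in it. -/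
def zdim {d : ℕ} (Z : Set (CS d)) : WithBot ℕ∞ :=
  Order.krullDim {C : Set (CS d) // C ⊆ Z ∧ IsZClosed C ∧ ZIrred C}

/-- `Z` is an irreducible component of `W`: a maximal irreducible Zariski-closed subset. -/
def IsIrredComp {d : ℕ} (Z W : Set (CS d)) : Prop :=
  Z ⊆ W ∧ IsZClosed Z ∧ ZIrred Z ∧
    ∀ Z' : Set (CS d), IsZClosed Z' → ZIrred Z' → Z ⊆ Z' → Z' ⊆ W → Z' = Z

/-- The type of faces of `A`. -/
def FaceT (a : Fin n → Lat d) := {G : Set (Fin n) // IsFace a G}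

instance (a : Fin n → Lat d) : Finite (FaceT a) := by
  unfold FaceT; infer_instance

noncomputable instance (a : Fin n → Lat d) : Fintype (FaceT a) := Fintype.ofFinite _

/-- Degree set of the localization M[∂^{−G}] of the monomial module with degree set `E`:
the set E − ℕG. -/
def locE (a : Fin n → Lat d) (E : Set (Lat d)) (G : Set (Fin n)) : Set (Lat d) :=
  {γ | ∃ f ∈ NFace a G, γ + f ∈ E}

/-- Functions supported on a subset, as a ℂ-submodule of the function space. -/
def funSupported {ι : Type*} (S : Set ι) : Submodule ℂ (ι → ℂ) where
  carrier := {c | ∀ i, i ∉ S → c i = 0}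
  add_mem' := by
    intro x y hx hy i hi
    simp only [Set.mem_setOf_eq] at hx hy
    simp [Pi.add_apply, hx i hi, hy i hi]
  zero_mem' := by intro i _; rfl
  smul_mem' := by
    intro r x hx i hi
    simp only [Set.mem_setOf_eq] at hx
    simp [Pi.smul_apply, hx i hi]

/-- The degree-γ part of the term of the Ishida complex ℧•_F(M) (base face `F`, monomial
module with degree set `E`) whose summands are indexed by the faces of absolute dimension
`j` (cohomological degree `j − d_F`): functions on the faces `G ⊇ F` with `d_G = j` and
`γ ∈ E − ℕG`. -/
def ishChain (a : Fin n → Lat d) (E : Set (Lat d)) (F : Set (Fin n)) (j : ℤ) (γ : Lat d) :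
    Submodule ℂ (FaceT a → ℂ) :=
  funSupported {G : FaceT a | F ⊆ G.1 ∧ (dimF a G.1 : ℤ) = j ∧ γ ∈ locE a E G.1}

/-- The differential of the Ishida complex (in each ℤ^d-degree): the component from a face
`G'` into a face `G''` covering it is `ε G' G''` times the natural localization map. -/
def ishDelta (a : Fin n → Lat d) (ε : Set (Fin n) → Set (Fin n) → ℂ) :
    (FaceT a → ℂ) →ₗ[ℂ] (FaceT a → ℂ) where
  toFun c := fun G'' => ∑ G' : FaceT a,
    if G'.1 ⊆ G''.1 ∧ dimF a G''.1 = dimF a G'.1 + 1 then ε G'.1 G''.1 * c G' else 0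
  map_add' x y := by
    funext G''
    simp only [Pi.add_apply, ← Finset.sum_add_distrib]
    refine Finset.sum_congr rfl fun G' _ => ?_
    by_cases h : G'.1 ⊆ G''.1 ∧ dimF a G''.1 = dimF a G'.1 + 1
    · simp [h, mul_add]
    · simp [h]
  map_smul' r x := by
    funext G''
    simp only [Pi.smul_apply, smul_eq_mul, RingHom.id_apply, Finset.mul_sum]
    refine Finset.sum_congr rfl fun G' _ => ?_
    by_cases h : G'.1 ⊆ G''.1 ∧ dimF a G''.1 = dimF a G'.1 + 1
    · simp only [h, and_self, if_true]; ring
    · simp [h]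

/-- Degree-γ cocycles of the Ishida complex at absolute dimension `j`. -/
def ishZ (a : Fin n → Lat d) (E : Set (Lat d)) (ε : Set (Fin n) → Set (Fin n) → ℂ)
    (F : Set (Fin n)) (j : ℤ) (γ : Lat d) : Submodule ℂ (FaceT a → ℂ) :=
  ishChain a E F j γ ⊓ LinearMap.ker (ishDelta a ε)

/-- Degree-γ coboundaries of the Ishida complex at absolute dimension `j`. -/
def ishB (a : Fin n → Lat d) (E : Set (Lat d)) (ε : Set (Fin n) → Set (Fin n) → ℂ)
    (F : Set (Fin n)) (j : ℤ) (γ : Lat d) : Submodule ℂ (FaceT a → ℂ) :=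
  Submodule.map (ishDelta a ε) (ishChain a E F (j - 1) γ)

/-- The degree-γ component of the cohomology of the Ishida complex ℧•_F(M) at absolute
dimension `j` (cohomological degree `j − d_F`). -/
abbrev ishH (a : Fin n → Lat d) (E : Set (Lat d)) (ε : Set (Fin n) → Set (Fin n) → ℂ)
    (F : Set (Fin n)) (j : ℤ) (γ : Lat d) :=
  ↥(ishZ a E ε F j γ) ⧸
    Submodule.comap (ishZ a E ε F j γ).subtype (ishB a E ε F j γ)

/-- Nonvanishing of the degree-γ component of the cohomology of the Ishida complex. -/
def ishHne (a : Fin n → Lat d) (E : Set (Lat d)) (ε : Set (Fin n) → Set (Fin n) → ℂ)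
    (F : Set (Fin n)) (j : ℤ) (γ : Lat d) : Prop :=
  ¬ (ishZ a E ε F j γ ≤ ishB a E ε F j γ)

/-- Degree-γ part of the term of ω•_{S_A} in cohomological degree `i`:
functions on the faces `G` with `d_{A/G} = i` and `γ ∈ ℕG − ℕA`. -/
def omChain (a : Fin n → Lat d) (i : ℤ) (γ : Lat d) : Submodule ℂ (FaceT a → ℂ) :=
  funSupported {G : FaceT a | (dimF a G.1 : ℤ) = (d : ℤ) - i ∧ γ ∈ NFmNA a G.1}

/-- Degree-γ part of the differential of ω•_{S_A}: the component from a face `G'` to a face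
`G''` covered by it is `ε G' G''` times the natural projection ℂ{ℕG'−ℕA} → ℂ{ℕG''−ℕA}. -/
def omDelta (a : Fin n → Lat d) (ε : Set (Fin n) → Set (Fin n) → ℂ) (γ : Lat d) :
    (FaceT a → ℂ) →ₗ[ℂ] (FaceT a → ℂ) where
  toFun c := fun G'' =>
    if γ ∈ NFmNA a G''.1 then
      ∑ G' : FaceT a,
        if G''.1 ⊆ G'.1 ∧ dimF a G'.1 = dimF a G''.1 + 1 then ε G'.1 G''.1 * c G' else 0
    else 0
  map_add' x y := by
    funext G''
    by_cases hγ : γ ∈ NFmNA a G''.1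
    · simp only [Pi.add_apply, hγ, if_true, ← Finset.sum_add_distrib]
      refine Finset.sum_congr rfl fun G' _ => ?_
      by_cases h : G''.1 ⊆ G'.1 ∧ dimF a G'.1 = dimF a G''.1 + 1
      · simp [h, mul_add]
      · simp [h]
    · simp [hγ]
  map_smul' r x := by
    funext G''
    by_cases hγ : γ ∈ NFmNA a G''.1
    · simp only [Pi.smul_apply, smul_eq_mul, RingHom.id_apply, hγ, if_true, Finset.mul_sum]
      refine Finset.sum_congr rfl fun G' _ => ?_
      by_cases h : G''.1 ⊆ G'.1 ∧ dimF a G'.1 = dimF a G''.1 + 1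
      · simp only [h, and_self, if_true]; ring
      · simp [h]
    · simp [hγ]

/-- Degree-γ cocycles of ω•_{S_A} in cohomological degree `i`. -/
def omZ (a : Fin n → Lat d) (ε : Set (Fin n) → Set (Fin n) → ℂ) (i : ℤ) (γ : Lat d) :
    Submodule ℂ (FaceT a → ℂ) :=
  omChain a i γ ⊓ LinearMap.ker (omDelta a ε γ)

/-- Degree-γ coboundaries of ω•_{S_A} in cohomological degree `i`. -/
def omB (a : Fin n → Lat d) (ε : Set (Fin n) → Set (Fin n) → ℂ) (i : ℤ) (γ : Lat d) :
    Submodule ℂ (FaceT a → ℂ) :=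
  Submodule.map (omDelta a ε γ) (omChain a (i - 1) γ)

/-- Nonvanishing of H^i(ω•_{S_A})_γ. -/
def omHne (a : Fin n → Lat d) (ε : Set (Fin n) → Set (Fin n) → ℂ) (i : ℤ) (γ : Lat d) : Prop :=
  ¬ (omZ a ε i γ ≤ omB a ε i γ)

/-- A ℤ^d-graded S_A-module, presented by its grading together with the (degree-shifting)
action of the monomials t^u, u ∈ ℕA. -/
structure GradedSAMod (a : Fin n → Lat d) (M : Type) [AddCommGroup M] [Module ℂ M] where
  decomp : Lat d → Submodule ℂ M
  internal : DirectSum.IsInternal decomp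
  act : (u : Lat d) → u ∈ NA a → (M →ₗ[ℂ] M)
  act_zero : ∀ h0 : (0 : Lat d) ∈ NA a, act 0 h0 = LinearMap.id
  act_add : ∀ (u : Lat d) (hu : u ∈ NA a) (v : Lat d) (hv : v ∈ NA a) (huv : u + v ∈ NA a),
    act (u + v) huv = (act u hu).comp (act v hv)
  act_grade : ∀ (u : Lat d) (hu : u ∈ NA a) (γ : Lat d), ∀ m ∈ decomp γ,
    act u hu m ∈ decomp (γ + u)

/-- Finite generation over S_A. -/
def GradedSAMod.FGmod {a : Fin n → Lat d} {M : Type} [AddCommGroup M] [Module ℂ M]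
    (g : GradedSAMod a M) : Prop :=
  ∃ S : Finset M, ∀ m : M,
    m ∈ Submodule.span ℂ {x | ∃ u, ∃ hu : u ∈ NA a, ∃ s ∈ S, x = g.act u hu s}

/-- Degrees of nonzero homogeneous elements of `M` that survive in the localization
`M[∂^{−H}]` (i.e. are killed by no power of t^{σ_H}). -/
def GradedSAMod.survTdeg {a : Fin n → Lat d} {M : Type} [AddCommGroup M] [Module ℂ M]
    (g : GradedSAMod a M) (H : Set (Fin n)) : Set (Lat d) :=
  {γ | ∃ m ∈ g.decomp γ, m ≠ 0 ∧ ∀ (k : ℕ) (hk : k • sigmaF a H ∈ NA a), g.act _ hk m ≠ 0}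

/-- The quasidegree set of the localization `M[∂^{−H}]` of a finitely generated graded
module `M`: the union over `k` of the Zariski closures of the true degree sets of the
finitely generated graded submodules t^{−kσ_H}·M of the localization. -/
def GradedSAMod.qdegLoc {a : Fin n → Lat d} {M : Type} [AddCommGroup M] [Module ℂ M]
    (g : GradedSAMod a M) (H : Set (Fin n)) : Set (CS d) :=
  ⋃ k : ℕ, zClosure (toC '' {γ : Lat d | γ + k • sigmaF a H ∈ g.survTdeg H})

/-- A ℂ-submodule is graded: it is spanned by its homogeneous elements. -/
def IsGradedSubC {d : ℕ} {M : Type} [AddCommGroup M] [Module ℂ M]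
    (decomp : Lat d → Submodule ℂ M) (N : Submodule ℂ M) : Prop :=
  N = Submodule.span ℂ ((N : Set M) ∩ ⋃ γ : Lat d, (decomp γ : Set M))

/-- A ℂ-submodule is an S_A-submodule: stable under the monomial action. -/
def IsStableSub {a : Fin n → Lat d} {M : Type} [AddCommGroup M] [Module ℂ M]
    (g : GradedSAMod a M) (N : Submodule ℂ M) : Prop :=
  ∀ (u : Lat d) (hu : u ∈ NA a), ∀ m ∈ N, g.act u hu m ∈ N

/-- The semigroup ring S_A = ℂ[ℕA] as a subalgebra of ℂ[ℤ^d]. -/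
def SAlg (a : Fin n → Lat d) : Subalgebra ℂ (Laur d) :=
  Algebra.adjoin ℂ {x | ∃ α ∈ NA a, x = mono α}

/-- The monomial t^u, u ∈ ℕA, as an element of S_A. -/
def smono (a : Fin n → Lat d) (u : Lat d) (hu : u ∈ NA a) : ↥(SAlg a) :=
  ⟨mono u, Algebra.subset_adjoin ⟨u, hu, rfl⟩⟩

/-- The underlying ℂ-vector space of the monomial module ℂ{E}: finitely supported
functions on `E`. -/
abbrev wMod (d : ℕ) (E : Set (Lat d)) := ↥(Finsupp.supported ℂ ℂ E)

/-- The action of the monomial t^w on ℂ{E}: shift the degree by `w`, truncate back to `E`. -/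
def wAct {d : ℕ} (E : Set (Lat d)) (w : Lat d) : wMod d E →ₗ[ℂ] wMod d E :=
  (Finsupp.restrictDom ℂ ℂ E).comp
    ((Finsupp.lmapDomain ℂ ℂ (fun γ => γ + w)).comp (Finsupp.supported ℂ ℂ E).subtype)

/-- The elements annihilated by some power of the ideal generated by the t^{a_i}, i ∉ F. -/
def torsionAt (a : Fin n → Lat d) (F : Set (Fin n)) {ML : Type} [AddCommGroup ML]
    [Module ℂ ML] (TL : (u : Lat d) → u ∈ NA a → (ML →ₗ[ℂ] ML)) : Set ML :=
  {y | ∃ k : ℕ, ∀ f : Fin k → Fin n, (∀ j, f j ∉ F) →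
    ∀ h : (∑ j, a (f j)) ∈ NA a, TL (∑ j, a (f j)) h y = 0}

/-- The toric ideal I_A ⊆ R_A = ℂ[∂_1,…,∂_n]. -/
def toricIdeal (a : Fin n → Lat d) : Ideal (MvPolynomial (Fin n) ℂ) :=
  RingHom.ker (MvPolynomial.aeval (fun i => mono (a i)) : MvPolynomial (Fin n) ℂ →ₐ[ℂ] Laur d)

/-- The ideal I_F^A = I_A + ⟨∂_i : a_i ∉ F⟩ of R_A. -/
def IFA (a : Fin n → Lat d) (F : Set (Fin n)) : Ideal (MvPolynomial (Fin n) ℂ) :=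
  toricIdeal a ⊔ Ideal.span {p | ∃ i, i ∉ F ∧ p = MvPolynomial.X i}

/-- An R_A-submodule is graded: it is spanned by its homogeneous elements. -/
def IsGradedSubR {d n : ℕ} {M : Type} [AddCommGroup M] [Module ℂ M]
    [Module (MvPolynomial (Fin n) ℂ) M]
    (decomp : Lat d → Submodule ℂ M) (N : Submodule (MvPolynomial (Fin n) ℂ) M) : Prop :=
  N = Submodule.span (MvPolynomial (Fin n) ℂ) ((N : Set M) ∩ ⋃ γ : Lat d, (decomp γ : Set M))

/-- `h` is the primitive integral support function of the facet `G`. -/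
def IsPISF (a : Fin n → Lat d) (G : Set (Fin n)) (h : Lat d →ₗ[ℤ] ℤ) : Prop :=
  (∃ x, h x = 1) ∧ (∀ i, 0 ≤ h (a i)) ∧ (∀ i, h (a i) = 0 ↔ i ∈ G)

/-- The ℂ-linear extension of an integral linear form to ℂ^d. -/
def hC {d : ℕ} (h : Lat d →ₗ[ℤ] ℤ) (β : CS d) : ℂ :=
  ∑ j : Fin d, β j * ((h (Pi.single j 1) : ℤ) : ℂ)



section Aux14

variable {d n : ℕ}

lemma toR_add (y z : Lat d) : toR (y + z) = toR y + toR z := by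
  funext j; simp [toR]

lemma toR_zero : toR (0 : Lat d) = 0 := by funext j; simp [toR]

/-- `toR` as a ℤ-linear map. -/
def toRL (d : ℕ) : Lat d →ₗ[ℤ] (Fin d → ℝ) where
  toFun := toR
  map_add' := toR_add
  map_smul' := by
    intro m y; funext j
    simp [toR]

@[simp] lemma toRL_apply (y : Lat d) : toRL d y = toR y := rfl

/-- The real extension of an integral linear functional. -/
def hRlin (h : Lat d →ₗ[ℤ] ℤ) : (Fin d → ℝ) →ₗ[ℝ] ℝ where
  toFun x := ∑ j, x j * (h (Pi.single j 1) : ℝ)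
  map_add' x y := by
    simp [add_mul, Finset.sum_add_distrib]
  map_smul' c x := by
    simp [Finset.mul_sum, mul_assoc]

lemma hRlin_toR (h : Lat d →ₗ[ℤ] ℤ) (y : Lat d) : hRlin h (toR y) = (h y : ℝ) := by
  have hy : y = ∑ j, y j • (Pi.single j 1 : Lat d) := by
    have := Finset.univ_sum_single y
    conv_lhs => rw [← this]
    refine Finset.sum_congr rfl fun j _ => ?_
    funext k
    by_cases hk : k = j <;> simp [Pi.single_apply, hk]
  have : h y = ∑ j, y j * h (Pi.single j 1) := by
    conv_lhs => rw [hy]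
    rw [map_sum]
    refine Finset.sum_congr rfl fun j _ => ?_
    rw [map_smul, smul_eq_mul]
  rw [this]
  push_cast
  simp [hRlin, toR]


variable {a : Fin n → Lat d}

lemma mem_cone_of_coeffs {F : Set (Fin n)} {c : Fin n → ℝ} (h0 : ∀ i, 0 ≤ c i)
    (hs : ∀ i, i ∉ F → c i = 0) : ∑ i, c i • toR (a i) ∈ cone a F :=
  ⟨c, h0, hs, rfl⟩

lemma cone_zero (F : Set (Fin n)) : (0 : Fin d → ℝ) ∈ cone a F :=
  ⟨0, fun _ => le_refl _, fun _ _ => rfl, by simp⟩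

lemma cone_add {F : Set (Fin n)} {x y : Fin d → ℝ} (hx : x ∈ cone a F) (hy : y ∈ cone a F) :
    x + y ∈ cone a F := by
  obtain ⟨c, hc0, hcs, rfl⟩ := hx
  obtain ⟨c', hc0', hcs', rfl⟩ := hy
  refine ⟨c + c', fun i => add_nonneg (hc0 i) (hc0' i),
    fun i hi => by simp [hcs i hi, hcs' i hi], ?_⟩
  rw [← Finset.sum_add_distrib]
  refine Finset.sum_congr rfl fun i _ => ?_
  simp [add_smul]

lemma cone_smul {F : Set (Fin n)} {x : Fin d → ℝ} {t : ℝ} (ht : 0 ≤ t) (hx : x ∈ cone a F) :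
    t • x ∈ cone a F := by
  obtain ⟨c, hc0, hcs, rfl⟩ := hx
  refine ⟨t • c, fun i => mul_nonneg ht (hc0 i), fun i hi => by simp [hcs i hi], ?_⟩
  rw [Finset.smul_sum]
  refine Finset.sum_congr rfl fun i _ => ?_
  simp [smul_smul]

lemma cone_mono {F F' : Set (Fin n)} (h : F ⊆ F') : cone a F ⊆ cone a F' := by
  rintro x ⟨c, hc0, hcs, rfl⟩
  exact ⟨c, hc0, fun i hi => hcs i (fun hiF => hi (h hiF)), rfl⟩

lemma vec_mem_cone (i : Fin n) : toR (a i) ∈ cone a Set.univ := by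
  have := mem_cone_of_coeffs (a := a) (F := Set.univ)
    (c := fun j => if j = i then (1:ℝ) else 0) (fun j => by positivity)
    (fun j hj => absurd (Set.mem_univ j) hj)
  simpa using this

lemma convex_cone (F : Set (Fin n)) : Convex ℝ (cone a F) := by
  intro x hx y hy s t hs ht _
  exact cone_add (cone_smul hs hx) (cone_smul ht hy)

lemma apply_nonneg_of_valid {φ : (Fin d → ℝ) →ₗ[ℝ] ℝ} (hval : ∀ i, 0 ≤ φ (toR (a i)))
    {F : Set (Fin n)} {x : Fin d → ℝ} (hx : x ∈ cone a F) : 0 ≤ φ x := by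
  obtain ⟨c, hc0, hcs, rfl⟩ := hx
  rw [map_sum]
  exact Finset.sum_nonneg fun i _ => by
    rw [map_smul, smul_eq_mul]; exact mul_nonneg (hc0 i) (hval i)

lemma apply_eq_zero_of_mem_coneG {φ : (Fin d → ℝ) →ₗ[ℝ] ℝ}
    {x : Fin d → ℝ} (hx : x ∈ cone a {i | φ (toR (a i)) = 0}) : φ x = 0 := by
  obtain ⟨c, hc0, hcs, rfl⟩ := hx
  rw [map_sum]
  refine Finset.sum_eq_zero fun i _ => ?_
  rw [map_smul, smul_eq_mul]
  by_cases hi : φ (toR (a i)) = 0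
  · rw [hi, mul_zero]
  · rw [hcs i hi, zero_mul]

lemma mem_coneG_of_apply_eq_zero {φ : (Fin d → ℝ) →ₗ[ℝ] ℝ}
    (hval : ∀ i, 0 ≤ φ (toR (a i))) {x : Fin d → ℝ} (hx : x ∈ cone a Set.univ)
    (h0 : φ x = 0) : x ∈ cone a {i | φ (toR (a i)) = 0} := by
  obtain ⟨c, hc0, hcs, rfl⟩ := hx
  refine ⟨c, hc0, fun i hi => ?_, rfl⟩
  simp only [Set.mem_setOf_eq] at hi
  by_contra hci
  have hterm : ∀ j ∈ Finset.univ, 0 ≤ c j * φ (toR (a j)) :=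
    fun j _ => mul_nonneg (hc0 j) (hval j)
  have hsum : ∑ j, c j * φ (toR (a j)) = 0 := by
    rw [← h0, map_sum]
    exact Finset.sum_congr rfl fun j _ => by rw [map_smul, smul_eq_mul]
  have := (Finset.sum_eq_zero_iff_of_nonneg hterm).mp hsum i (Finset.mem_univ i)
  have hpos : 0 < φ (toR (a i)) := lt_of_le_of_ne (hval i) (Ne.symm hi)
  have : c i = 0 := by
    rcases mul_eq_zero.mp this with h | h
    · exact h
    · exact absurd h hi
  exact hci this

lemma isFace_zeroSet {φ : (Fin d → ℝ) →ₗ[ℝ] ℝ} (hval : ∀ i, 0 ≤ φ (toR (a i))) :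
    IsFace a {i | φ (toR (a i)) = 0} := by
  constructor
  · intro x y hx hy hxy
    have hφx : 0 ≤ φ x := apply_nonneg_of_valid hval hx
    have hφy : 0 ≤ φ y := apply_nonneg_of_valid hval hy
    have hφxy : φ x + φ y = 0 := by
      have := apply_eq_zero_of_mem_coneG hxy
      rwa [map_add] at this
    have hx0 : φ x = 0 := le_antisymm (by linarith) hφx
    have hy0 : φ y = 0 := le_antisymm (by linarith) hφy
    exact ⟨mem_coneG_of_apply_eq_zero hval hx hx0, mem_coneG_of_apply_eq_zero hval hy hy0⟩
  · intro i hi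
    exact apply_eq_zero_of_mem_coneG hi


lemma spanR_top (hZA : SpansZ a) :
    Submodule.span ℝ (Set.range fun i => toR (a i)) = ⊤ := by
  set W := Submodule.span ℝ (Set.range fun i => toR (a i)) with hW
  have hall : ∀ y : Lat d, toR y ∈ W := by
    intro y
    have hy : y ∈ AddSubgroup.closure (Set.range a) := by rw [hZA]; trivial
    induction hy using AddSubgroup.closure_induction with
    | mem x hx =>
      obtain ⟨i, rfl⟩ := hx
      exact Submodule.subset_span ⟨i, rfl⟩
    | zero => rw [toR_zero]; exact W.zero_mem
    | add x y _ _ hx hy => rw [toR_add]; exact W.add_mem hx hy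
    | neg x _ hx =>
      have : toR (-x) = -toR x := by funext j; simp [toR]
      rw [this]; exact W.neg_mem hx
  rw [eq_top_iff]
  intro x _
  have hx : x = ∑ j, x j • (Pi.single j 1 : Fin d → ℝ) := by
    have := Finset.univ_sum_single x
    conv_lhs => rw [← this]
    refine Finset.sum_congr rfl fun j _ => ?_
    funext k
    by_cases hk : k = j <;> simp [Pi.single_apply, hk]
  rw [hx]
  refine W.sum_mem fun j _ => W.smul_mem _ ?_
  have : (Pi.single j 1 : Fin d → ℝ) = toR (Pi.single j 1 : Lat d) := by
    funext k
    by_cases hk : k = j <;> simp [toR, Pi.single_apply, hk]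
  rw [this]; exact hall _

lemma sum_restrict_eq (s : Finset (Fin n)) (c : Fin n → ℝ)
    (hcs : ∀ i, i ∉ (↑s : Set (Fin n)) → c i = 0) :
    ∑ i : s, c i • toR (a i) = ∑ i, c i • toR (a i) := by
  rw [Finset.sum_coe_sort s (fun i => c i • toR (a i))]
  exact Finset.sum_subset s.subset_univ (fun i _ hi => by
    rw [hcs i (by simpa using hi), zero_smul])

lemma cone_finset_closed (s : Finset (Fin n))
    (hind : LinearIndependent ℝ (fun i : s => toR (a i))) :
    IsClosed (cone a (↑s : Set (Fin n))) := by
  classical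
  set f : (s → ℝ) →ₗ[ℝ] (Fin d → ℝ) := Fintype.linearCombination ℝ (fun i : s => toR (a i))
    with hf
  have hfapp : ∀ c : s → ℝ, f c = ∑ i : s, c i • toR (a i) := by
    intro c; simp [hf, Fintype.linearCombination_apply]
  have hker : LinearMap.ker f = ⊥ := by
    rw [LinearMap.ker_eq_bot']
    intro c hc
    rw [hfapp] at hc
    funext i
    exact Fintype.linearIndependent_iff.mp hind c hc i
  have hemb := f.isClosedEmbedding_of_injective hker
  have himg : cone a (↑s : Set (Fin n)) = f '' {c : s → ℝ | ∀ i, 0 ≤ c i} := by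
    ext x
    constructor
    · rintro ⟨c, hc0, hcs, rfl⟩
      refine ⟨fun i => c i, fun i => hc0 i, ?_⟩
      rw [hfapp, sum_restrict_eq s c hcs]
    · rintro ⟨c, hc0, rfl⟩
      rw [hfapp]
      set cf : Fin n → ℝ := fun i => if h : i ∈ s then c ⟨i, h⟩ else 0 with hcf
      refine ⟨cf, fun i => ?_, fun i hi => ?_, ?_⟩
      · by_cases h : i ∈ s
        · simpa [hcf, h] using hc0 ⟨i, h⟩
        · simp [hcf, h]
      · simp only [hcf]
        rw [dif_neg (by simpa using hi)]
      · rw [← sum_restrict_eq s cf (fun i hi => dif_neg (by simpa using hi))]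
        refine Finset.sum_congr rfl fun i _ => ?_
        simp [hcf, i.2]
  rw [himg]
  refine hemb.isClosedMap _ ?_
  have : {c : s → ℝ | ∀ i, 0 ≤ c i} = ⋂ i : s, (fun c : s → ℝ => c i) ⁻¹' Set.Ici 0 := by
    ext c; simp [Set.mem_iInter]
  rw [this]
  exact isClosed_iInter fun i => IsClosed.preimage (continuous_apply i) isClosed_Ici

lemma caratheodory_cone : ∀ (s : Finset (Fin n)) (c : Fin n → ℝ), (∀ i, 0 ≤ c i) →
    (∀ i, i ∉ s → c i = 0) →
    ∃ t : Finset (Fin n), LinearIndependent ℝ (fun i : t => toR (a i)) ∧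
      ∑ i, c i • toR (a i) ∈ cone a ↑t := by
  classical
  intro s
  induction s using Finset.strongInduction with
  | _ s IH =>
    intro c hc0 hcs
    by_cases hind : LinearIndependent ℝ (fun i : s => toR (a i))
    · exact ⟨s, hind, mem_cone_of_coeffs hc0 (fun i hi => hcs i (by simpa using hi))⟩
    · rw [Fintype.not_linearIndependent_iff] at hind
      obtain ⟨g0, hg0sum, i0, hg00⟩ := hind
      obtain ⟨g, hgsum, i1, hg1⟩ :
          ∃ g : s → ℝ, ∑ i : s, g i • toR (a i) = 0 ∧ ∃ i, 0 < g i := by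
        rcases lt_or_gt_of_ne hg00 with hneg | hpos
        · refine ⟨-g0, ?_, i0, by simpa using hneg⟩
          have : ∑ i : s, (-g0) i • toR (a (i : Fin n)) = -∑ i : s, g0 i • toR (a (i : Fin n)) := by
            simp [neg_smul]
          rw [this, hg0sum, neg_zero]
        · exact ⟨g0, hg0sum, i0, hpos⟩
      set gh : Fin n → ℝ := fun i => if h : i ∈ s then g ⟨i, h⟩ else 0 with hgh
      have hghs : ∀ i, i ∉ (↑s : Set (Fin n)) → gh i = 0 := by
        intro i hi; simp only [hgh]; rw [dif_neg (by simpa using hi)]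
      have hghsum : ∑ i, gh i • toR (a i) = 0 := by
        rw [← sum_restrict_eq s gh hghs, ← hgsum]
        refine Finset.sum_congr rfl fun i _ => ?_
        simp [hgh, i.2]
      set T : Finset (Fin n) := s.filter (fun i => 0 < gh i) with hT
      have hTne : T.Nonempty := by
        refine ⟨(i1 : Fin n), Finset.mem_filter.mpr ⟨i1.2, ?_⟩⟩
        have hgh1 : gh (i1 : Fin n) = g i1 := by simp [hgh, i1.2]
        rw [hgh1]; exact hg1
      obtain ⟨j, hjT, hjmin⟩ := T.exists_min_image (fun i => c i / gh i) hTne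
      have hjs : j ∈ s := (Finset.mem_filter.mp hjT).1
      have hgj : 0 < gh j := (Finset.mem_filter.mp hjT).2
      set t0 : ℝ := c j / gh j with ht0def
      have ht0 : 0 ≤ t0 := div_nonneg (hc0 j) hgj.le
      set c' : Fin n → ℝ := fun i => c i - t0 * gh i with hc'
      have hc'0 : ∀ i, 0 ≤ c' i := by
        intro i
        by_cases his : i ∈ s
        · by_cases hgi : 0 < gh i
          · have hiT : i ∈ T := Finset.mem_filter.mpr ⟨his, hgi⟩
            have hmin := hjmin i hiT
            have hle : t0 * gh i ≤ c i := by
              rw [ht0def]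
              calc c j / gh j * gh i ≤ c i / gh i * gh i :=
                    mul_le_mul_of_nonneg_right hmin hgi.le
                _ = c i := div_mul_cancel₀ _ hgi.ne'
            simp only [hc']; linarith
          · push_neg at hgi
            have h1 : t0 * gh i ≤ 0 := mul_nonpos_of_nonneg_of_nonpos ht0 hgi
            have h2 := hc0 i
            simp only [hc']; linarith
        · have h2 : gh i = 0 := hghs i (by simpa using his)
          simp [hc', h2, hc0 i]
      have hc's : ∀ i, i ∉ s.erase j → c' i = 0 := by
        intro i hi
        by_cases hij : i = j
        · subst hij
          simp only [hc', ht0def]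
          field_simp
          simp
        · have his : i ∉ s := fun hmem => hi (Finset.mem_erase.mpr ⟨hij, hmem⟩)
          have h1 : c i = 0 := hcs i his
          have h2 : gh i = 0 := hghs i (by simpa using his)
          simp [hc', h1, h2]
      have hsum' : ∑ i, c' i • toR (a i) = ∑ i, c i • toR (a i) := by
        have : ∑ i, c' i • toR (a i)
            = ∑ i, c i • toR (a i) - t0 • ∑ i, gh i • toR (a i) := by
          rw [Finset.smul_sum, ← Finset.sum_sub_distrib]
          refine Finset.sum_congr rfl fun i _ => ?_
          simp [hc', sub_smul, smul_smul]
        rw [this, hghsum, smul_zero, sub_zero]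
      obtain ⟨t, htind, htmem⟩ := IH (s.erase j) (Finset.erase_ssubset hjs) c' hc'0 hc's
      rw [hsum'] at htmem
      exact ⟨t, htind, htmem⟩

lemma cone_closed : IsClosed (cone a Set.univ) := by
  have hrep : cone a Set.univ =
      ⋃ t ∈ {t : Finset (Fin n) | LinearIndependent ℝ (fun i : t => toR (a i))},
        cone a ↑t := by
    ext x
    constructor
    · rintro ⟨c, hc0, _, rfl⟩
      obtain ⟨t, htind, htmem⟩ :=
        caratheodory_cone Finset.univ c hc0 (fun i hi => absurd (Finset.mem_univ i) hi)
      exact Set.mem_biUnion htind htmem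
    · intro hx
      obtain ⟨t, _, hmem⟩ := Set.mem_iUnion₂.mp hx
      exact cone_mono (Set.subset_univ _) hmem
  rw [hrep]
  exact Set.Finite.isClosed_biUnion (Set.toFinite _) (fun t ht => cone_finset_closed t ht)


lemma exists_valid_sep {x : Fin d → ℝ} (hx : x ∉ cone a Set.univ) :
    ∃ φ : (Fin d → ℝ) →ₗ[ℝ] ℝ, (∀ i, 0 ≤ φ (toR (a i))) ∧ φ x < 0 := by
  obtain ⟨f, u, hfu, hux⟩ :=
    geometric_hahn_banach_closed_point (convex_cone Set.univ) cone_closed hx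
  have hu0 : 0 < u := by simpa using hfu 0 (cone_zero _)
  have hle : ∀ y ∈ cone a Set.univ, f y ≤ 0 := by
    intro y hy
    by_contra hpos
    push_neg at hpos
    have ht : (0:ℝ) ≤ u / f y + 1 := by
      have := le_of_lt (div_pos hu0 hpos); linarith
    have hlt := hfu ((u / f y + 1) • y) (cone_smul ht hy)
    rw [map_smul, smul_eq_mul] at hlt
    have hdiv : u / f y * f y = u := div_mul_cancel₀ _ hpos.ne'
    nlinarith
  refine ⟨-(f : (Fin d → ℝ) →ₗ[ℝ] ℝ), fun i => ?_, ?_⟩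
  · have := hle _ (vec_mem_cone i)
    simpa using this
  · have : (0:ℝ) < f x := lt_trans hu0 hux
    simpa using this

lemma finrank_ker_functional {φ : (Fin d → ℝ) →ₗ[ℝ] ℝ} {v : Fin d → ℝ} (hv : φ v ≠ 0) :
    Module.finrank ℝ (LinearMap.ker φ) = d - 1 := by
  have hsurj : Function.Surjective φ := by
    intro r
    refine ⟨(r / φ v) • v, ?_⟩
    rw [map_smul, smul_eq_mul, div_mul_cancel₀ _ hv]
  have hrange : LinearMap.range φ = ⊤ := LinearMap.range_eq_top.mpr hsurj
  have := LinearMap.finrank_range_add_finrank_ker φ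
  rw [hrange] at this
  have h1 : Module.finrank ℝ (⊤ : Submodule ℝ ℝ) = 1 := by
    rw [finrank_top]; exact Module.finrank_self ℝ
  have h2 : Module.finrank ℝ (Fin d → ℝ) = d := by
    rw [Module.finrank_pi]; exact Fintype.card_fin d
  omega

lemma zeroSpan_le_ker (φ : (Fin d → ℝ) →ₗ[ℝ] ℝ) :
    Submodule.span ℝ ((fun i => toR (a i)) '' {i | φ (toR (a i)) = 0}) ≤ LinearMap.ker φ := by
  rw [Submodule.span_le]
  rintro _ ⟨i, hi, rfl⟩
  exact hi

lemma pivot (hZA : SpansZ a) {x : Fin d → ℝ} :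
    ∀ (m : ℕ) (φ : (Fin d → ℝ) →ₗ[ℝ] ℝ), (∀ i, 0 ≤ φ (toR (a i))) → φ x < 0 →
    d - 1 ≤ Module.finrank ℝ
      (Submodule.span ℝ ((fun i => toR (a i)) '' {i | φ (toR (a i)) = 0})) + m →
    ∃ ψ : (Fin d → ℝ) →ₗ[ℝ] ℝ, (∀ i, 0 ≤ ψ (toR (a i))) ∧ ψ x < 0 ∧
      Module.finrank ℝ
        (Submodule.span ℝ ((fun i => toR (a i)) '' {i | ψ (toR (a i)) = 0})) = d - 1 := by
  intro m
  induction m with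
  | zero =>
    intro φ hval hφx hrank
    refine ⟨φ, hval, hφx, le_antisymm ?_ (by omega)⟩
    calc Module.finrank ℝ (Submodule.span ℝ ((fun i => toR (a i)) '' {i | φ (toR (a i)) = 0}))
        ≤ Module.finrank ℝ (LinearMap.ker φ) := Submodule.finrank_mono (zeroSpan_le_ker φ)
      _ = d - 1 := finrank_ker_functional (v := x) (ne_of_lt hφx)
  | succ m IH =>
    intro φ hval hφx hrank
    set Z := Submodule.span ℝ ((fun i => toR (a i)) '' {i | φ (toR (a i)) = 0}) with hZ
    by_cases heq : Module.finrank ℝ Z = d - 1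
    · exact ⟨φ, hval, hφx, heq⟩
    · have hle : Module.finrank ℝ Z ≤ d - 1 := by
        calc Module.finrank ℝ Z ≤ Module.finrank ℝ (LinearMap.ker φ) :=
              Submodule.finrank_mono (zeroSpan_le_ker φ)
          _ = d - 1 := finrank_ker_functional (v := x) (ne_of_lt hφx)
      have hxne : x ≠ 0 := by
        intro h0; rw [h0, map_zero] at hφx; exact absurd hφx (lt_irrefl 0)
      have hWfin : Module.finrank ℝ (Z ⊔ Submodule.span ℝ {x} : Submodule ℝ (Fin d → ℝ)) ≤ d - 1 := by
        have h1 := Submodule.finrank_add_le_finrank_add_finrank Z (Submodule.span ℝ {x})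
        rw [finrank_span_singleton hxne] at h1
        omega
      have hWlt : (Z ⊔ Submodule.span ℝ {x} : Submodule ℝ (Fin d → ℝ)) < ⊤ := by
        rcases lt_or_eq_of_le (le_top (a := (Z ⊔ Submodule.span ℝ {x} : Submodule ℝ (Fin d → ℝ)))) with h | h
        · exact h
        · exfalso
          have : Module.finrank ℝ (Z ⊔ Submodule.span ℝ {x} : Submodule ℝ (Fin d → ℝ)) = d := by
            rw [h, finrank_top, Module.finrank_pi, Fintype.card_fin]
          omega
      obtain ⟨g, hg0, hgmap⟩ :=
        Submodule.exists_dual_map_eq_bot_of_lt_top hWlt inferInstance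
      have hgW : ∀ y ∈ (Z ⊔ Submodule.span ℝ {x} : Submodule ℝ (Fin d → ℝ)), g y = 0 := by
        intro y hy
        have : g y ∈ (⊥ : Submodule ℝ ℝ) := hgmap ▸ Submodule.mem_map_of_mem hy
        simpa using this
      have hgx : g x = 0 :=
        hgW x (le_sup_right (α := Submodule ℝ (Fin d → ℝ)) (Submodule.mem_span_singleton_self x))
      have hgZ : ∀ i, φ (toR (a i)) = 0 → g (toR (a i)) = 0 := fun i hi =>
        hgW _ (le_sup_left (α := Submodule ℝ (Fin d → ℝ)) (Submodule.subset_span ⟨i, hi, rfl⟩))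
      have hgne : ∃ i, g (toR (a i)) ≠ 0 := by
        by_contra hall
        push_neg at hall
        apply hg0
        have hker : Submodule.span ℝ (Set.range fun i => toR (a i)) ≤ LinearMap.ker g := by
          rw [Submodule.span_le]; rintro _ ⟨i, rfl⟩; exact hall i
        rw [spanR_top hZA] at hker
        exact LinearMap.ker_eq_top.mp (top_le_iff.mp hker)
      obtain ⟨g1, hg1x, hg1Z, i2, hi2⟩ :
          ∃ g1 : Module.Dual ℝ (Fin d → ℝ), g1 x = 0 ∧
            (∀ i, φ (toR (a i)) = 0 → g1 (toR (a i)) = 0) ∧ ∃ i, g1 (toR (a i)) < 0 := by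
        obtain ⟨i, hi⟩ := hgne
        rcases lt_or_gt_of_ne hi with h | h
        · exact ⟨g, hgx, hgZ, i, h⟩
        · refine ⟨-g, by simp [hgx], fun j hj => by simp [hgZ j hj], i, by simpa using h⟩
      classical
      set T : Finset (Fin n) := Finset.univ.filter (fun i => g1 (toR (a i)) < 0) with hT
      have hTne : T.Nonempty := ⟨i2, by simp [hT, hi2]⟩
      have hTpos : ∀ i ∈ T, 0 < φ (toR (a i)) := by
        intro i hi
        rcases lt_or_eq_of_le (hval i) with h | h
        · exact h
        · exfalso
          have := hg1Z i h.symm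
          have hmem := (Finset.mem_filter.mp hi).2
          rw [this] at hmem
          exact absurd hmem (lt_irrefl 0)
      obtain ⟨j, hjT, hjmin⟩ := T.exists_min_image
        (fun i => φ (toR (a i)) / (-g1 (toR (a i)))) hTne
      have hgj : g1 (toR (a j)) < 0 := (Finset.mem_filter.mp hjT).2
      set t0 : ℝ := φ (toR (a j)) / (-g1 (toR (a j))) with ht0
      have ht0pos : 0 < t0 := div_pos (hTpos j hjT) (by linarith)
      set ψ : (Fin d → ℝ) →ₗ[ℝ] ℝ := φ + t0 • g1 with hψ
      have hψapp : ∀ y, ψ y = φ y + t0 * g1 y := fun y => rfl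
      have hψval : ∀ i, 0 ≤ ψ (toR (a i)) := by
        intro i
        rw [hψapp]
        by_cases hiT : i ∈ T
        · have hgi : g1 (toR (a i)) < 0 := (Finset.mem_filter.mp hiT).2
          have hmin := hjmin i hiT
          have : t0 * (-g1 (toR (a i))) ≤ φ (toR (a i)) := by
            calc t0 * (-g1 (toR (a i)))
                ≤ (φ (toR (a i)) / (-g1 (toR (a i)))) * (-g1 (toR (a i))) :=
                  mul_le_mul_of_nonneg_right hmin (by linarith)
              _ = φ (toR (a i)) := div_mul_cancel₀ _ (by linarith)
          linarith
        · have hgi : 0 ≤ g1 (toR (a i)) := by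
            have := Finset.mem_filter.not.mp hiT
            push_neg at this
            exact this (Finset.mem_univ i)
          have := mul_nonneg ht0pos.le hgi
          linarith [hval i]
      have hψx : ψ x < 0 := by rw [hψapp, hg1x]; simpa using hφx
      have hsubset : {i | φ (toR (a i)) = 0} ⊆ {i | ψ (toR (a i)) = 0} := by
        intro i hi
        simp only [Set.mem_setOf_eq] at hi ⊢
        rw [hψapp, hi, hg1Z i hi]; ring
      have hjmem : ψ (toR (a j)) = 0 := by
        have hne : -g1 (toR (a j)) ≠ 0 := by linarith
        have hmul : t0 * g1 (toR (a j)) = -φ (toR (a j)) := by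
          rw [ht0]; field_simp; rw [mul_div_assoc, div_self (ne_of_lt hgj), mul_one]
        rw [hψapp, hmul]; ring
      have hjnot : toR (a j) ∉ Z := by
        intro hmem
        have : Z ≤ LinearMap.ker g1 := by
          rw [hZ, Submodule.span_le]
          rintro _ ⟨i, hi, rfl⟩
          exact hg1Z i hi
        have := this hmem
        rw [LinearMap.mem_ker] at this
        rw [this] at hgj
        exact absurd hgj (lt_irrefl 0)
      have hZlt : Z < Submodule.span ℝ ((fun i => toR (a i)) '' {i | ψ (toR (a i)) = 0}) := by
        refine lt_of_le_of_ne (Submodule.span_mono (Set.image_mono hsubset)) ?_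
        intro hcontra
        apply hjnot
        rw [hcontra]
        exact Submodule.subset_span ⟨j, hjmem, rfl⟩
      have hrank' := Submodule.finrank_lt_finrank_of_lt hZlt
      exact IH ψ hψval hψx (by omega)


lemma int_indep_of_real_indep {ι : Type*} (z : ι → Lat d)
    (hind : LinearIndependent ℝ (fun i => toR (z i))) : LinearIndependent ℤ z := by
  rw [linearIndependent_iff']
  intro s g hrel i hi
  have hreal : ∑ j ∈ s, (g j : ℝ) • toR (z j) = 0 := by
    have := congrArg (toRL d) hrel
    rw [map_sum, map_zero] at this
    rw [← this]
    refine Finset.sum_congr rfl fun j _ => ?_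
    rw [map_smul]
    simp [Int.cast_smul_eq_zsmul]
  have h2 := linearIndependent_iff'.mp hind s (fun j => (g j : ℝ)) hreal i hi
  have h3 : (g i : ℝ) = 0 := by simpa using h2
  exact_mod_cast h3

lemma rationalize (hd : 0 < d) (hZA : SpansZ a)
    {φ : (Fin d → ℝ) →ₗ[ℝ] ℝ} (hval : ∀ i, 0 ≤ φ (toR (a i)))
    {x : Fin d → ℝ} (hφx : φ x < 0)
    (hrank : Module.finrank ℝ
      (Submodule.span ℝ ((fun i => toR (a i)) '' {i | φ (toR (a i)) = 0})) = d - 1) :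
    ∃ h : Lat d →ₗ[ℤ] ℤ, IsPISF a {i | φ (toR (a i)) = 0} h ∧ hRlin h x < 0 ∧
      dimF a {i | φ (toR (a i)) = 0} = d - 1 := by
  classical
  set G : Set (Fin n) := {i | φ (toR (a i)) = 0} with hG
  -- the lattice hyperplane
  set K : Submodule ℤ (Lat d) :=
    LinearMap.ker ((φ.restrictScalars ℤ).comp (toRL d)) with hK
  have hKmem : ∀ y : Lat d, y ∈ K ↔ φ (toR y) = 0 := by
    intro y; rw [hK, LinearMap.mem_ker]; rfl
  have haK : ∀ i, a i ∈ K ↔ i ∈ G := by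
    intro i; rw [hKmem]; rfl
  -- a column outside G
  obtain ⟨j, hjG⟩ : ∃ j, j ∉ G := by
    by_contra hall
    push_neg at hall
    have himg : ((fun i => toR (a i)) '' G) = Set.range fun i => toR (a i) := by
      ext w
      constructor
      · rintro ⟨i, _, rfl⟩; exact ⟨i, rfl⟩
      · rintro ⟨i, rfl⟩; exact ⟨i, hall i, rfl⟩
    rw [himg, spanR_top hZA] at hrank
    rw [finrank_top, Module.finrank_pi, Fintype.card_fin] at hrank
    omega
  have hφj : 0 < φ (toR (a j)) := lt_of_le_of_ne (hval j) (Ne.symm hjG)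
  -- the quotient
  set Q := Lat d ⧸ K with hQ
  haveI : NoZeroSMulDivisors ℤ Q := by
    constructor
    intro c q hcq
    by_cases hc : c = 0
    · exact Or.inl hc
    · right
      obtain ⟨y, rfl⟩ := Submodule.mkQ_surjective K q
      rw [← map_smul, Submodule.mkQ_apply, Submodule.Quotient.mk_eq_zero] at hcq
      rw [hKmem] at hcq
      have : toR (c • y) = (c : ℝ) • toR y := by
        funext k
        simp only [toR, Pi.smul_apply, smul_eq_mul]
        push_cast
        ring
      rw [this, map_smul, smul_eq_mul] at hcq
      have : φ (toR y) = 0 := by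
        rcases mul_eq_zero.mp hcq with h | h
        · exact absurd (by exact_mod_cast h) hc
        · exact h
      rw [Submodule.mkQ_apply, Submodule.Quotient.mk_eq_zero, hKmem]
      exact this
  set b := Module.Free.chooseBasis ℤ Q with hb
  set ι := Module.Free.ChooseBasisIndex ℤ Q with hι
  have hQne : (K.mkQ (a j)) ≠ 0 := by
    rw [Submodule.mkQ_apply, Ne, Submodule.Quotient.mk_eq_zero, haK]
    exact hjG
  haveI hιne : Nonempty ι := by
    by_contra hemp
    haveI : IsEmpty ι := not_nonempty_iff.mp hemp
    apply hQne
    have := b.repr (K.mkQ (a j))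
    have h0 : b.repr (K.mkQ (a j)) = 0 := Subsingleton.elim _ _
    have := congrArg b.repr.symm h0
    rw [LinearEquiv.symm_apply_apply, map_zero] at this
    exact this
  -- the independent real spanning subset
  obtain ⟨s, hssub, hsspan, hsind⟩ :=
    exists_linearIndependent ℝ ((fun i => toR (a i)) '' G)
  have hsfin : s.Finite := hsind.setFinite
  haveI := hsfin.fintype
  have hscard : s.toFinset.card = d - 1 := by
    have h1 := finrank_span_set_eq_card hsind
    rw [hsspan] at h1
    omega
  -- integer preimages of elements of s
  have hzex : ∀ w : s, ∃ i ∈ G, toR (a i) = (w : Fin d → ℝ) := by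
    rintro ⟨w, hw⟩
    obtain ⟨i, hi, hieq⟩ := hssub hw
    exact ⟨i, hi, hieq⟩
  choose zidx hzG hzeq using hzex
  have hzK : ∀ w : s, a (zidx w) ∈ K := fun w => (haK _).mpr (hzG w)
  -- Q has a unique basis element
  haveI hsub : Subsingleton ι := by
    constructor
    intro k1 k2
    by_contra hne
    obtain ⟨y1, hy1⟩ := Submodule.mkQ_surjective K (b k1)
    obtain ⟨y2, hy2⟩ := Submodule.mkQ_surjective K (b k2)
    set v : Sum (Fin 2) s → Lat d := Sum.elim ![y1, y2] (fun w => a (zidx w)) with hv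
    have hcard : Fintype.card (Sum (Fin 2) s) = d + 1 := by
      rw [Fintype.card_sum, Fintype.card_fin, ← Set.toFinset_card, hscard]
      omega
    have hnind : ¬ LinearIndependent ℤ v := by
      intro hind
      have := hind.fintype_card_le_finrank
      rw [hcard, Module.finrank_pi, Fintype.card_fin] at this
      omega
    rw [Fintype.not_linearIndependent_iff] at hnind
    obtain ⟨g, hgrel, i0, hgi0⟩ := hnind
    -- push to Q
    have hQrel : g (Sum.inl 0) • b k1 + g (Sum.inl 1) • b k2 = 0 := by
      have := congrArg K.mkQ hgrel
      rw [map_sum, map_zero] at this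
      rw [Fintype.sum_sum_type] at this
      have hz0 : ∀ w : s, K.mkQ (g (Sum.inr w) • v (Sum.inr w)) = 0 := by
        intro w
        rw [map_smul]
        have : K.mkQ (v (Sum.inr w)) = 0 := by
          rw [Submodule.mkQ_apply, Submodule.Quotient.mk_eq_zero]
          exact hzK w
        rw [this, smul_zero]
      rw [Finset.sum_congr rfl (fun w _ => hz0 w), Finset.sum_const, smul_zero,
        add_zero] at this
      rw [Fin.sum_univ_two] at this
      have f1 : K.mkQ (g (Sum.inl 0) • v (Sum.inl 0)) = g (Sum.inl 0) • b k1 := by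
        rw [map_smul, show v (Sum.inl 0) = y1 from rfl, hy1]
      have f2 : K.mkQ (g (Sum.inl 1) • v (Sum.inl 1)) = g (Sum.inl 1) • b k2 := by
        rw [map_smul, show v (Sum.inl 1) = y2 from rfl, hy2]
      rw [f1, f2] at this
      exact this
    have hg1 : g (Sum.inl 0) = 0 ∧ g (Sum.inl 1) = 0 := by
      have := congrArg b.repr hQrel
      rw [map_add, map_smul, map_smul, map_zero, b.repr_self, b.repr_self] at this
      constructor
      · have := congrArg (fun f => f k1) this
        simpa [Finsupp.single_apply, Ne.symm hne] using this
      · have := congrArg (fun f => f k2) this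
        simpa [Finsupp.single_apply, hne] using this
    -- remaining relation among the z's
    have hzrel : ∑ w : s, g (Sum.inr w) • a (zidx w) = 0 := by
      rw [Fintype.sum_sum_type, Fin.sum_univ_two, hg1.1, hg1.2, zero_smul, zero_smul,
        add_zero, zero_add] at hgrel
      exact hgrel
    have hzind : LinearIndependent ℤ (fun w : s => a (zidx w)) := by
      apply int_indep_of_real_indep
      have : (fun w : s => toR (a (zidx w))) = fun w : s => (w : Fin d → ℝ) := by
        funext w; exact hzeq w
      rw [this]
      exact hsind
    have hall0 : ∀ w : s, g (Sum.inr w) = 0 := by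
      intro w
      exact linearIndependent_iff'.mp hzind Finset.univ (fun w => g (Sum.inr w))
        hzrel w (Finset.mem_univ w)
    rcases i0 with i0 | w0
    · fin_cases i0
      · exact hgi0 hg1.1
      · exact hgi0 hg1.2
    · exact hgi0 (hall0 w0)
  obtain ⟨k0⟩ := hιne
  -- the integral functional
  set h0 : Lat d →ₗ[ℤ] ℤ := (b.coord k0).comp K.mkQ with hh0
  have hh0K : ∀ y : Lat d, h0 y = 0 ↔ y ∈ K := by
    intro y
    constructor
    · intro hy
      have hrepr : K.mkQ y = (b.repr (K.mkQ y) k0) • b k0 := by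
        conv_lhs => rw [← b.sum_repr (K.mkQ y)]
        rw [Finset.sum_eq_single k0]
        · intro k _ hk
          exact absurd (Subsingleton.elim k k0) hk
        · intro hk
          exact absurd (Finset.mem_univ k0) hk
      rw [← Submodule.Quotient.mk_eq_zero, ← Submodule.mkQ_apply, hrepr]
      have : b.repr (K.mkQ y) k0 = h0 y := rfl
      rw [this, hy, zero_smul]
    · intro hy
      have : K.mkQ y = 0 := by
        rw [Submodule.mkQ_apply, Submodule.Quotient.mk_eq_zero]; exact hy
      rw [hh0]
      simp [this]
  have hh0surj : ∃ y : Lat d, h0 y = 1 := by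
    obtain ⟨y, hy⟩ := Submodule.mkQ_surjective K (b k0)
    refine ⟨y, ?_⟩
    rw [hh0]
    simp [hy]
  have hh0j : h0 (a j) ≠ 0 := fun hc => hjG ((haK j).mp ((hh0K _).mp hc))
  -- fix the sign
  obtain ⟨h, hhK, hhsurj, hhj⟩ :
      ∃ h : Lat d →ₗ[ℤ] ℤ, (∀ y : Lat d, h y = 0 ↔ y ∈ K) ∧ (∃ y, h y = 1) ∧
        0 < h (a j) := by
    rcases lt_or_gt_of_ne hh0j with hneg | hpos
    · obtain ⟨y, hy⟩ := hh0surj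
      refine ⟨-h0, fun z => ?_, ⟨-y, by simp [hy]⟩, by simp; omega⟩
      rw [LinearMap.neg_apply, neg_eq_zero]; exact hh0K z
    · exact ⟨h0, hh0K, hh0surj, hpos⟩
  -- ker φ = real span of the G columns
  have hkerφ : Submodule.span ℝ ((fun i => toR (a i)) '' G) = LinearMap.ker φ := by
    apply Submodule.eq_of_le_of_finrank_eq (zeroSpan_le_ker φ)
    rw [hrank, finrank_ker_functional (v := x) (ne_of_lt hφx)]
  -- hRlin h vanishes on ker φ
  have hvanish : ∀ y ∈ LinearMap.ker φ, hRlin h y = 0 := by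
    intro y hy
    rw [← hkerφ] at hy
    have hsle : Submodule.span ℝ ((fun i => toR (a i)) '' G) ≤ LinearMap.ker (hRlin h) := by
      rw [Submodule.span_le]
      rintro _ ⟨i, hi, rfl⟩
      rw [SetLike.mem_coe, LinearMap.mem_ker, hRlin_toR]
      have : h (a i) = 0 := (hhK _).mpr ((haK i).mpr hi)
      rw [this]; norm_num
    exact LinearMap.mem_ker.mp (hsle hy)
  -- proportionality
  set c : ℝ := (h (a j) : ℝ) / φ (toR (a j)) with hc
  have hcpos : 0 < c := div_pos (by exact_mod_cast hhj) hφj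
  have hprop : ∀ y, hRlin h y = c * φ y := by
    have hsup : LinearMap.ker φ ⊔ Submodule.span ℝ {toR (a j)} = ⊤ := by
      apply Submodule.eq_top_of_finrank_eq
      have hnotin : toR (a j) ∉ LinearMap.ker φ := by
        rw [LinearMap.mem_ker]; exact ne_of_gt hφj
      have hlt : LinearMap.ker φ <
          LinearMap.ker φ ⊔ Submodule.span ℝ {toR (a j)} := by
        refine lt_of_le_of_ne le_sup_left ?_
        intro hcontra
        apply hnotin
        rw [hcontra]
        exact le_sup_right (α := Submodule ℝ (Fin d → ℝ))
          (Submodule.mem_span_singleton_self _)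
      have h1 := Submodule.finrank_lt_finrank_of_lt hlt
      have h2 : Module.finrank ℝ (LinearMap.ker φ) = d - 1 :=
        finrank_ker_functional (v := x) (ne_of_lt hφx)
      have h3 : Module.finrank ℝ
          (LinearMap.ker φ ⊔ Submodule.span ℝ {toR (a j)} : Submodule ℝ (Fin d → ℝ))
          ≤ Module.finrank ℝ (Fin d → ℝ) := Submodule.finrank_le _
      rw [Module.finrank_pi, Fintype.card_fin] at h3 ⊢
      omega
    intro y
    have hy : y ∈ (⊤ : Submodule ℝ (Fin d → ℝ)) := trivial
    rw [← hsup] at hy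
    obtain ⟨u, hu, w, hw, rfl⟩ := Submodule.mem_sup.mp hy
    obtain ⟨t, rfl⟩ := Submodule.mem_span_singleton.mp hw
    rw [map_add, map_add, map_smul, map_smul, hvanish u hu, hRlin_toR]
    have hφu : φ u = 0 := LinearMap.mem_ker.mp hu
    rw [hφu]
    rw [smul_eq_mul, smul_eq_mul]
    rw [hc]
    field_simp
    ring
  refine ⟨h, ⟨hhsurj, ?_, ?_⟩, ?_, ?_⟩
  · intro i
    have : (h (a i) : ℝ) = c * φ (toR (a i)) := by rw [← hRlin_toR, hprop]
    have hnn : 0 ≤ (h (a i) : ℝ) := by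
      rw [this]; exact mul_nonneg hcpos.le (hval i)
    exact_mod_cast hnn
  · intro i
    constructor
    · intro hzero
      have : (h (a i) : ℝ) = c * φ (toR (a i)) := by rw [← hRlin_toR, hprop]
      rw [hzero] at this
      have := this.symm
      rcases mul_eq_zero.mp (by exact_mod_cast this) with hcc | hφi
      · exact absurd hcc (ne_of_gt hcpos)
      · exact hφi
    · intro hi
      exact (hhK _).mpr ((haK i).mpr hi)
  · rw [hprop]
    exact mul_neg_of_pos_of_neg hcpos hφx
  -- dimension of the face
  · rw [dimF]
    set P := Submodule.span ℤ (a '' G) with hP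
    haveI : Module.Finite ℤ P :=
      Module.Finite.span_of_finite ℤ (Set.toFinite (a '' G))
    have hge : d - 1 ≤ Module.finrank ℤ P := by
      have hPz : ∀ w : s, a (zidx w) ∈ P :=
        fun w => Submodule.subset_span ⟨zidx w, hzG w, rfl⟩
      set vP : s → P := fun w => ⟨a (zidx w), hPz w⟩ with hvP
      have hindP : LinearIndependent ℤ vP := by
        have hcomp : (P.subtype ∘ vP) = fun w : s => a (zidx w) := rfl
        have hzind : LinearIndependent ℤ (fun w : s => a (zidx w)) := by
          apply int_indep_of_real_indep
          have : (fun w : s => toR (a (zidx w))) = fun w : s => (w : Fin d → ℝ) := by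
            funext w; exact hzeq w
          rw [this]
          exact hsind
        exact LinearIndependent.of_comp P.subtype (by rw [hcomp]; exact hzind)
      have := hindP.fintype_card_le_finrank
      rw [← Set.toFinset_card, hscard] at this
      omega
    have hle : Module.finrank ℤ P ≤ d - 1 := by
      haveI : Module.Free ℤ P := inferInstance
      set bp := Module.Free.chooseBasis ℤ P with hbp
      set ιP := Module.Free.ChooseBasisIndex ℤ P with hιP
      have hhP : ∀ y ∈ P, h y = 0 := by
        intro y hy
        refine Submodule.span_induction ?_ ?_ ?_ ?_ hy
        · rintro _ ⟨i, hi, rfl⟩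
          exact (hhK _).mpr ((haK i).mpr hi)
        · exact map_zero h
        · intro u v _ _ hu hv; rw [map_add, hu, hv, add_zero]
        · intro t u _ hu; rw [map_smul, hu, smul_zero]
      set v2 : Option ιP → Lat d := fun o => o.elim (a j) (fun k => (bp k : Lat d)) with hv2
      have hind2 : LinearIndependent ℤ v2 := by
        rw [Fintype.linearIndependent_iff]
        intro g hgrel
        rw [Fintype.sum_option] at hgrel
        simp only [hv2, Option.elim] at hgrel
        have hap : h (∑ k : ιP, g (some k) • (bp k : Lat d)) = 0 := by
          rw [map_sum]
          refine Finset.sum_eq_zero fun k _ => ?_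
          rw [map_smul, hhP _ (bp k).2, smul_zero]
        have := congrArg h hgrel
        rw [map_add, map_smul, hap, add_zero, map_zero, smul_eq_mul] at this
        have hg0 : g none = 0 := by
          rcases mul_eq_zero.mp this with h1 | h2
          · exact h1
          · exact absurd h2 (ne_of_gt hhj)
        have hrest : ∑ k : ιP, g (some k) • (bp k : Lat d) = 0 := by
          rw [hg0, zero_smul, zero_add] at hgrel
          exact hgrel
        have hrestP : ∑ k : ιP, g (some k) • bp k = 0 := by
          apply Submodule.injective_subtype P
          rw [map_sum, map_zero]
          simpa [map_smul] using hrest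
        intro o
        rcases o with _ | k
        · exact hg0
        · have := Fintype.linearIndependent_iff.mp bp.linearIndependent
            (fun k => g (some k)) hrestP
          exact this k
      have := hind2.fintype_card_le_finrank
      rw [Fintype.card_option, Module.finrank_pi, Fintype.card_fin] at this
      have hcard : Fintype.card ιP = Module.finrank ℤ P :=
        (Module.finrank_eq_card_chooseBasisIndex ℤ P).symm
      omega
    omega


lemma facet_separation (hd : 0 < d) (hZA : SpansZ a) {x : Fin d → ℝ}
    (hx : x ∉ cone a Set.univ) :
    ∃ (G : Set (Fin n)) (h : Lat d →ₗ[ℤ] ℤ), IsFace a G ∧ dimF a G = d - 1 ∧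
      Module.finrank ℝ (Submodule.span ℝ ((fun i => toR (a i)) '' G)) = d - 1 ∧
      IsPISF a G h ∧ hRlin h x < 0 := by
  obtain ⟨φ0, hval0, hφx0⟩ := exists_valid_sep hx
  obtain ⟨φ, hval, hφx, hrank⟩ := pivot hZA (d - 1) φ0 hval0 hφx0 (by omega)
  obtain ⟨h, hPISF, hhx, hdim⟩ := rationalize hd hZA hval hφx hrank
  exact ⟨{i | φ (toR (a i)) = 0}, h, isFace_zeroSet hval, hdim, hrank, hPISF, hhx⟩

lemma int_functional_zero (hZA : SpansZ a) {h : Lat d →ₗ[ℤ] ℤ}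
    (hv : ∀ i, h (a i) = 0) (y : Lat d) : h y = 0 := by
  have hy : y ∈ AddSubgroup.closure (Set.range a) := by rw [hZA]; trivial
  induction hy using AddSubgroup.closure_induction with
  | mem z hz => obtain ⟨i, rfl⟩ := hz; exact hv i
  | zero => exact map_zero h
  | add z w _ _ hz hw => rw [map_add, hz, hw, add_zero]
  | neg z _ hz => rw [map_neg, hz, neg_zero]

lemma pisf_unique (hd : 0 < d) (hZA : SpansZ a) {G : Set (Fin n)}
    (hrank : Module.finrank ℝ (Submodule.span ℝ ((fun i => toR (a i)) '' G)) = d - 1)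
    {h1 h2 : Lat d →ₗ[ℤ] ℤ} (hp1 : IsPISF a G h1) (hp2 : IsPISF a G h2) : h1 = h2 := by
  obtain ⟨⟨x1, hx1⟩, hn1, hz1⟩ := hp1
  obtain ⟨⟨x2, hx2⟩, hn2, hz2⟩ := hp2
  obtain ⟨j, hjG⟩ : ∃ j, j ∉ G := by
    by_contra hall
    push_neg at hall
    have : h1 x1 = 0 := int_functional_zero hZA (fun i => (hz1 i).mpr (hall i)) x1
    rw [hx1] at this; exact one_ne_zero this
  have hj1 : 0 < h1 (a j) := lt_of_le_of_ne (hn1 j) (fun hc => hjG ((hz1 j).mp hc.symm))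
  have hj2 : 0 < h2 (a j) := lt_of_le_of_ne (hn2 j) (fun hc => hjG ((hz2 j).mp hc.symm))
  have hkerW : ∀ (h : Lat d →ₗ[ℤ] ℤ), (∃ x, h x = 1) → (∀ i, h (a i) = 0 ↔ i ∈ G) →
      LinearMap.ker (hRlin h) = Submodule.span ℝ ((fun i => toR (a i)) '' G) := by
    intro h ⟨x0, hx0⟩ hz
    have hne : hRlin h (toR x0) ≠ 0 := by
      rw [hRlin_toR, hx0]; norm_num
    have hle : Submodule.span ℝ ((fun i => toR (a i)) '' G) ≤ LinearMap.ker (hRlin h) := by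
      rw [Submodule.span_le]
      rintro _ ⟨i, hi, rfl⟩
      rw [SetLike.mem_coe, LinearMap.mem_ker, hRlin_toR, (hz i).mpr hi]
      norm_num
    symm
    apply Submodule.eq_of_le_of_finrank_eq hle
    rw [hrank, finrank_ker_functional hne]
  have hker1 := hkerW h1 ⟨x1, hx1⟩ hz1
  have hker2 := hkerW h2 ⟨x2, hx2⟩ hz2
  -- proportionality
  have hsup : LinearMap.ker (hRlin h2) ⊔ Submodule.span ℝ {toR (a j)} = ⊤ := by
    apply Submodule.eq_top_of_finrank_eq
    have hnotin : toR (a j) ∉ LinearMap.ker (hRlin h2) := by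
      rw [LinearMap.mem_ker, hRlin_toR]
      exact_mod_cast ne_of_gt hj2
    have hlt : LinearMap.ker (hRlin h2) <
        LinearMap.ker (hRlin h2) ⊔ Submodule.span ℝ {toR (a j)} := by
      refine lt_of_le_of_ne le_sup_left ?_
      intro hcontra
      apply hnotin
      rw [hcontra]
      exact le_sup_right (α := Submodule ℝ (Fin d → ℝ))
        (Submodule.mem_span_singleton_self _)
    have hlt2 := Submodule.finrank_lt_finrank_of_lt hlt
    have h3 : Module.finrank ℝ
        (LinearMap.ker (hRlin h2) ⊔ Submodule.span ℝ {toR (a j)} : Submodule ℝ (Fin d → ℝ))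
        ≤ Module.finrank ℝ (Fin d → ℝ) := Submodule.finrank_le _
    have hkfr : Module.finrank ℝ (LinearMap.ker (hRlin h2)) = d - 1 := by
      rw [hker2, hrank]
    rw [hkfr] at hlt2
    rw [Module.finrank_pi, Fintype.card_fin] at h3 ⊢
    omega
  set c : ℝ := (h1 (a j) : ℝ) / (h2 (a j) : ℝ) with hc
  have hprop : ∀ y, hRlin h1 y = c * hRlin h2 y := by
    intro y
    have hy : y ∈ (⊤ : Submodule ℝ (Fin d → ℝ)) := trivial
    rw [← hsup] at hy
    obtain ⟨u, hu, w, hw, rfl⟩ := Submodule.mem_sup.mp hy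
    obtain ⟨t, rfl⟩ := Submodule.mem_span_singleton.mp hw
    have hu1 : hRlin h1 u = 0 := by
      have : u ∈ LinearMap.ker (hRlin h1) := by rw [hker1, ← hker2]; exact hu
      rwa [LinearMap.mem_ker] at this
    have hu2 : hRlin h2 u = 0 := LinearMap.mem_ker.mp hu
    rw [map_add, map_add, map_smul, map_smul, hu1, hu2, hRlin_toR, hRlin_toR]
    rw [smul_eq_mul, smul_eq_mul, hc]
    have : (h2 (a j) : ℝ) ≠ 0 := by exact_mod_cast ne_of_gt hj2
    field_simp
    ring
  -- c is the integer h1 x2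
  have hcval : c = (h1 x2 : ℝ) := by
    have := hprop (toR x2)
    rw [hRlin_toR, hRlin_toR, hx2] at this
    rw [this]; ring
  set q : ℤ := h1 x2 with hq
  have hq1 : q * h2 x1 = 1 := by
    have := hprop (toR x1)
    rw [hRlin_toR, hRlin_toR, hx1, hcval] at this
    exact_mod_cast this.symm
  have hqj : (h1 (a j) : ℝ) = (q : ℝ) * (h2 (a j) : ℝ) := by
    have := hprop (toR (a j))
    rw [hRlin_toR, hRlin_toR, hcval] at this
    exact_mod_cast this
  have hqj' : h1 (a j) = q * h2 (a j) := by exact_mod_cast hqj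
  have hqpos : 0 < q := by
    rcases le_or_gt q 0 with hq0 | hq0
    · exfalso
      have hmp : q * h2 (a j) ≤ 0 := mul_nonpos_of_nonpos_of_nonneg hq0 hj2.le
      omega
    · exact hq0
  have hq1' : q = 1 := by
    have hdvd : q ∣ 1 := ⟨h2 x1, hq1.symm⟩
    rcases Int.isUnit_iff.mp (isUnit_of_dvd_one hdvd) with h | h
    · exact h
    · exfalso; rw [h] at hqpos; omega
  apply LinearMap.ext
  intro y
  have := hprop (toR y)
  rw [hRlin_toR, hRlin_toR, hcval, hq1'] at this
  have h4 : h1 y = 1 * h2 y := by exact_mod_cast this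
  omega

lemma pisf_nonneg_on_NA {h : Lat d →ₗ[ℤ] ℤ} (hp : ∀ i, 0 ≤ h (a i))
    {u : Lat d} (hu : u ∈ NA a) : 0 ≤ h u := by
  induction hu using AddSubmonoid.closure_induction with
  | mem z hz => obtain ⟨i, rfl⟩ := hz; exact hp i
  | zero => rw [map_zero]
  | add z w _ _ hz hw => rw [map_add]; omega

lemma pisf_zero_on_NF {h : Lat d →ₗ[ℤ] ℤ} {F G : Set (Fin n)} (hFG : F ⊆ G)
    (hz : ∀ i, h (a i) = 0 ↔ i ∈ G) {v : Lat d} (hv : v ∈ NFace a F) : h v = 0 := by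
  induction hv using AddSubmonoid.closure_induction with
  | mem z hzz =>
    obtain ⟨i, hi, rfl⟩ := hzz
    exact (hz i).mpr (hFG hi)
  | zero => rw [map_zero]
  | add z w _ _ hzz hw => rw [map_add, hzz, hw, add_zero]

lemma sigmaF_mem_NFace (F : Set (Fin n)) : sigmaF a F ∈ NFace a F := by
  rw [sigmaF]
  refine AddSubmonoid.sum_mem _ fun i _ => ?_
  by_cases hi : i ∈ F
  · rw [if_pos hi]
    exact AddSubmonoid.subset_closure ⟨i, hi, rfl⟩
  · rw [if_neg hi]
    exact (NFace a F).zero_mem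

lemma h_sigmaF_zero {h : Lat d →ₗ[ℤ] ℤ} {F G : Set (Fin n)} (hFG : F ⊆ G)
    (hz : ∀ i, h (a i) = 0 ↔ i ∈ G) : h (sigmaF a F) = 0 :=
  pisf_zero_on_NF hFG hz (sigmaF_mem_NFace F)

lemma h_sigmaF_ge_one {h : Lat d →ₗ[ℤ] ℤ} {F G : Set (Fin n)} (hFG : ¬ F ⊆ G)
    (hn : ∀ i, 0 ≤ h (a i)) (hz : ∀ i, h (a i) = 0 ↔ i ∈ G) : 1 ≤ h (sigmaF a F) := by
  obtain ⟨i0, hi0F, hi0G⟩ : ∃ i0, i0 ∈ F ∧ i0 ∉ G := by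
    by_contra hc; push_neg at hc; exact hFG hc
  rw [sigmaF, map_sum]
  have hterm : ∀ i ∈ Finset.univ, 0 ≤ h (if i ∈ F then a i else 0) := by
    intro i _
    by_cases hi : i ∈ F
    · rw [if_pos hi]; exact hn i
    · rw [if_neg hi, map_zero]
  have hi0 : 1 ≤ h (if i0 ∈ F then a i0 else 0) := by
    rw [if_pos hi0F]
    have := hn i0
    have hne : h (a i0) ≠ 0 := fun hc => hi0G ((hz i0).mp hc)
    omega
  calc (1 : ℤ) ≤ h (if i0 ∈ F then a i0 else 0) := hi0
    _ ≤ ∑ i, h (if i ∈ F then a i else 0) :=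
        Finset.single_le_sum hterm (Finset.mem_univ i0)

end Aux14






/-- Assume ℕA is normal.  Then for every face `F ⪯ A`:
ℕA − ℕF = {α ∈ ℤ^d : h_G(α) ≥ 0 for every facet G of A with G ⪰ F}, where `h_G` is the
primitive integral support function of the facet `G`. -/
theorem NAmNF_support_function_description
    {d n : ℕ} (hd : 0 < d) (hn : 0 < n) (a : Fin n → Lat d)
    (hZA : SpansZ a) (hPt : Pointed a) (hNorm : Normal a)
    (F : Set (Fin n)) (hF : IsFace a F) :
    ∀ α : Lat d, α ∈ NAmNF a F ↔
      ∀ G : Set (Fin n), IsFace a G → F ⊆ G → dimF a G = d - 1 →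
        ∀ h : Lat d →ₗ[ℤ] ℤ, IsPISF a G h → 0 ≤ h α := by
  intro α
  constructor
  · rintro ⟨u, hu, v, hv, rfl⟩ G hGface hFG hGdim h hpisf
    obtain ⟨_, hn, hz⟩ := hpisf
    have h1 : 0 ≤ h u := pisf_nonneg_on_NA hn hu
    have h2 : h v = 0 := pisf_zero_on_NF hFG hz hv
    rw [map_sub, h2]
    omega
  · intro H
    classical
    set bnd : FaceT a → ℕ := fun Gf =>
      if hc : dimF a Gf.1 = d - 1 ∧ ¬ F ⊆ Gf.1 ∧ ∃ h' : Lat d →ₗ[ℤ] ℤ, IsPISF a Gf.1 h'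
      then (-(Classical.choose hc.2.2 α)).toNat else 0
      with hbnd
    set k : ℕ := Finset.univ.sup bnd with hk
    set y : Lat d := α + k • sigmaF a F with hy
    have hymem : toR y ∈ cone a Set.univ := by
      by_contra hnot
      obtain ⟨G, h, hGface, hGdim, hGrank, hGpisf, hsep⟩ := facet_separation hd hZA hnot
      rw [hRlin_toR] at hsep
      have hyneg : h y < 0 := by exact_mod_cast hsep
      have hdecomp : h y = h α + (k : ℤ) * h (sigmaF a F) := by
        rw [hy, map_add, map_nsmul, nsmul_eq_mul]
      obtain ⟨hex, hn, hz⟩ := hGpisf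
      by_cases hFG : F ⊆ G
      · have h0 := h_sigmaF_zero hFG hz
        have hge := H G hGface hFG hGdim h ⟨hex, hn, hz⟩
        rw [hdecomp, h0] at hyneg
        omega
      · set Gf : FaceT a := ⟨G, hGface⟩ with hGf
        have hc : dimF a Gf.1 = d - 1 ∧ ¬ F ⊆ Gf.1 ∧
            ∃ h' : Lat d →ₗ[ℤ] ℤ, IsPISF a Gf.1 h' := ⟨hGdim, hFG, h, hex, hn, hz⟩
        have heq : Classical.choose hc.2.2 = h :=
          pisf_unique hd hZA hGrank (Classical.choose_spec hc.2.2) ⟨hex, hn, hz⟩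
        have hble : bnd Gf ≤ k := Finset.le_sup (Finset.mem_univ Gf)
        have hbv : bnd Gf = (-(h α)).toNat := by
          simp only [hbnd]
          rw [dif_pos hc, heq]
        have hαk : -(h α) ≤ (k : ℤ) := by
          rw [hbv] at hble
          exact le_trans (Int.self_le_toNat _) (by exact_mod_cast hble)
        have hσ := h_sigmaF_ge_one hFG hn hz
        have hmul : (k:ℤ) * 1 ≤ (k:ℤ) * h (sigmaF a F) :=
          mul_le_mul_of_nonneg_left hσ (by positivity)
        rw [hdecomp] at hyneg
        omega
    have hu : y ∈ NA a := (hNorm y).mpr hymem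
    have hv : (k • sigmaF a F : Lat d) ∈ NFace a F :=
      (NFace a F).nsmul_mem (sigmaF_mem_NFace F) k
    exact ⟨y, hu, k • sigmaF a F, hv, (add_sub_cancel_right α (k • sigmaF a F)).symm⟩

end

end GKZ
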